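/- arXiv:1708.04813 — 8 statements merged into one kernel-verified Lean document; each statement's English description precedes it below -/
import Mathlib

section
/- Let z = (λ·H/(p·n0) − 1)/e. Then z > −1/e, there exists a unique real w > −1 with w·e^w = z, and the point t* = min{ L·ln 2 / (B·(w+1)), T } is the unique minimizer of F over the interval (0,T]. (This is the paper's closed-form optimal uploading/downloading duration, expressed through the principal branch W of the Lambert function as t* = min{ L ln 2 / (B(W(z)+1)), T }.) -/
private lemma psi_hasDeriv (s : ℝ) :
    HasDerivAt (fun x : ℝ => (1 - x) * Real.exp x) (-s * Real.exp s) s := by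
  have h := ((hasDerivAt_id' s).const_sub 1).fun_mul (Real.hasDerivAt_exp s)
  exact h.congr_deriv (by ring)

private lemma psi_strictAnti :
    StrictAntiOn (fun x : ℝ => (1 - x) * Real.exp x) (Set.Ici 0) := by
  apply strictAntiOn_of_deriv_neg (convex_Ici 0)
  · exact ((continuous_const.sub continuous_id).mul Real.continuous_exp).continuousOn
  · intro s hs
    rw [interior_Ici] at hs
    rw [(psi_hasDeriv s).deriv]
    nlinarith [Real.exp_pos s, Set.mem_Ioi.mp hs]

private lemma wexp_strictMono :
    StrictMonoOn (fun s : ℝ => s * Real.exp s) (Set.Ici (-1)) := by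
  apply strictMonoOn_of_deriv_pos (convex_Ici _)
  · exact (continuous_id.mul Real.continuous_exp).continuousOn
  · intro s hs
    rw [interior_Ici] at hs
    rw [((hasDerivAt_id' s).fun_mul (Real.hasDerivAt_exp s)).deriv]
    have h1 := Real.exp_pos s
    have h2 : -1 < s := Set.mem_Ioi.mp hs
    nlinarith

private lemma key_min (a c lam T t0 : ℝ) (ha : 0 < a) (hc : 0 < c) (hT : 0 < T)
    (ht0 : 0 < t0)
    (hcrit : c * (Real.exp (a / t0) * (1 - a / t0) - 1) + lam = 0) :
    ∀ t ∈ Set.Ioc (0:ℝ) T, t ≠ min t0 T →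
      c * min t0 T * (Real.exp (a / min t0 T) - 1) + lam * min t0 T <
      c * t * (Real.exp (a / t) - 1) + lam * t := by
  set G : ℝ → ℝ := fun t => c * t * (Real.exp (a / t) - 1) + lam * t with hGdef
  set φ : ℝ → ℝ := fun t => c * (Real.exp (a / t) * (1 - a / t) - 1) + lam with hφdef
  have hG : ∀ t : ℝ, t ≠ 0 → HasDerivAt G (φ t) t := by
    intro t ht
    have h1 : HasDerivAt (fun x : ℝ => a / x) (a * -(t ^ 2)⁻¹) t := by
      simpa [div_eq_mul_inv] using (hasDerivAt_inv ht).const_mul a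
    have h2 := h1.exp.sub_const 1
    have h3 := ((hasDerivAt_id' t).const_mul c).fun_mul h2
    have h4 := h3.fun_add ((hasDerivAt_id' t).const_mul lam)
    refine h4.congr_deriv ?_
    simp only [hφdef]
    field_simp
    ring
  have hneg : ∀ t : ℝ, 0 < t → t < t0 → φ t < 0 := by
    intro t h1 h2
    have hat : a / t0 < a / t := div_lt_div_of_pos_left ha h1 h2
    have hps := psi_strictAnti (Set.mem_Ici.mpr (le_of_lt (div_pos ha ht0)))
      (Set.mem_Ici.mpr (le_of_lt (div_pos ha h1))) hat
    simp only at hps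
    have := mul_lt_mul_of_pos_left hps hc
    simp only [hφdef]
    nlinarith [hcrit]
  have hpos : ∀ t : ℝ, t0 < t → 0 < φ t := by
    intro t h2
    have h1 : 0 < t := lt_trans ht0 h2
    have hat : a / t < a / t0 := div_lt_div_of_pos_left ha ht0 h2
    have hps := psi_strictAnti (Set.mem_Ici.mpr (le_of_lt (div_pos ha h1)))
      (Set.mem_Ici.mpr (le_of_lt (div_pos ha ht0))) hat
    simp only at hps
    have := mul_lt_mul_of_pos_left hps hc
    simp only [hφdef]
    nlinarith [hcrit]
  have hcontG : ∀ s : Set ℝ, s ⊆ Set.Ioi 0 → ContinuousOn G s := by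
    intro s hs t ht
    exact ((hG t (ne_of_gt (hs ht))).continuousAt).continuousWithinAt
  rcases le_or_gt t0 T with hle | hlt
  · rw [min_eq_left hle]
    intro t ht hne
    rcases lt_or_gt_of_ne hne with h | h
    · have hanti : StrictAntiOn G (Set.Ioc 0 t0) := by
        apply strictAntiOn_of_deriv_neg (convex_Ioc 0 t0)
          (hcontG _ Set.Ioc_subset_Ioi_self)
        intro s hs
        rw [interior_Ioc] at hs
        rw [(hG s (ne_of_gt hs.1)).deriv]
        exact hneg s hs.1 hs.2
      exact hanti ⟨ht.1, le_of_lt h⟩ ⟨ht0, le_refl _⟩ h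
    · have hmono : StrictMonoOn G (Set.Icc t0 T) := by
        apply strictMonoOn_of_deriv_pos (convex_Icc t0 T)
          (hcontG _ (fun y hy => lt_of_lt_of_le ht0 hy.1))
        intro s hs
        rw [interior_Icc] at hs
        rw [(hG s (ne_of_gt (lt_trans ht0 hs.1))).deriv]
        exact hpos s hs.1
      exact hmono ⟨le_refl _, hle⟩ ⟨le_of_lt h, ht.2⟩ h
  · rw [min_eq_right (le_of_lt hlt)]
    intro t ht hne
    have h : t < T := lt_of_le_of_ne ht.2 hne
    have hanti : StrictAntiOn G (Set.Ioc 0 T) := by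
      apply strictAntiOn_of_deriv_neg (convex_Ioc 0 T)
        (hcontG _ Set.Ioc_subset_Ioi_self)
      intro s hs
      rw [interior_Ioc] at hs
      rw [(hG s (ne_of_gt hs.1)).deriv]
      exact hneg s hs.1 (lt_trans hs.2 hlt)
    exact hanti ⟨ht.1, le_of_lt h⟩ ⟨hT, le_refl _⟩ h

/-- Closed-form optimal transmission duration via the Lambert W function.
With `z = (λ*H/(p*n0) - 1)/e`: (i) `z > -1/e`; (ii) there is a unique `w > -1` with
`w * e^w = z`; and (iii) for this `w`, the point `t* = min (L*ln 2/(B*(w+1))) T` lies in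
`(0,T]` and is the unique minimizer over `(0,T]` of the per-task Lagrangian cost
`F(t) = p*(n0*t/H)*(2^(L/(B*t)) - 1) + λ*t`. -/
theorem lambert_closed_form_optimal_duration
    (B n0 T H p L lam : ℝ)
    (hB : 0 < B) (hn0 : 0 < n0) (hT : 0 < T) (hH : 0 < H)
    (hp0 : 0 < p) (hp1 : p ≤ 1) (hL : 0 < L) (hlam : 0 < lam) :
    -1 / Real.exp 1 < (lam * H / (p * n0) - 1) / Real.exp 1 ∧
    (∃! w : ℝ, -1 < w ∧ w * Real.exp w = (lam * H / (p * n0) - 1) / Real.exp 1) ∧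
    (∀ w : ℝ, -1 < w → w * Real.exp w = (lam * H / (p * n0) - 1) / Real.exp 1 →
      min (L * Real.log 2 / (B * (w + 1))) T ∈ Set.Ioc (0 : ℝ) T ∧
      ∀ t ∈ Set.Ioc (0 : ℝ) T, t ≠ min (L * Real.log 2 / (B * (w + 1))) T →
        p * (n0 * min (L * Real.log 2 / (B * (w + 1))) T / H) *
            ((2 : ℝ) ^ (L / (B * min (L * Real.log 2 / (B * (w + 1))) T)) - 1) +
          lam * min (L * Real.log 2 / (B * (w + 1))) T <
        p * (n0 * t / H) * ((2 : ℝ) ^ (L / (B * t)) - 1) + lam * t) := by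
  have hx : 0 < lam * H / (p * n0) := by positivity
  have he := Real.exp_pos 1
  have hA : -1 / Real.exp 1 < (lam * H / (p * n0) - 1) / Real.exp 1 :=
    (div_lt_div_iff_of_pos_right he).mpr (by linarith)
  refine ⟨hA, ?_, ?_⟩
  · -- existence and uniqueness of w
    set z := (lam * H / (p * n0) - 1) / Real.exp 1 with hzdef
    have hf1 : (-1 : ℝ) * Real.exp (-1) = -1 / Real.exp 1 := by
      rw [Real.exp_neg]; field_simp
    set b := max 0 z with hbdef
    have hb0 : (0:ℝ) ≤ b := le_max_left _ _
    have hzb : z ≤ b * Real.exp b := by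
      have h1 : z ≤ b := le_max_right _ _
      have h2 : (1:ℝ) ≤ Real.exp b := by nlinarith [Real.add_one_le_exp b]
      nlinarith
    have hmem : z ∈ Set.Icc ((-1:ℝ) * Real.exp (-1)) (b * Real.exp b) :=
      ⟨by rw [hf1]; linarith, hzb⟩
    have hcont : ContinuousOn (fun s : ℝ => s * Real.exp s) (Set.Icc (-1) b) :=
      (continuous_id'.mul Real.continuous_exp).continuousOn
    obtain ⟨w, hwmem, hfw0⟩ :=
      intermediate_value_Icc (by linarith : (-1:ℝ) ≤ b) hcont hmem
    have hfw : w * Real.exp w = z := hfw0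
    have hwgt : -1 < w := by
      rcases lt_or_eq_of_le hwmem.1 with h | h
      · exact h
      · exfalso
        rw [← h, hf1] at hfw
        linarith
    refine ⟨w, ⟨hwgt, hfw⟩, ?_⟩
    intro y hy
    exact wexp_strictMono.injOn (Set.mem_Ici.mpr (le_of_lt hy.1))
      (Set.mem_Ici.mpr (le_of_lt hwgt))
      (show y * Real.exp y = w * Real.exp w by rw [hy.2, hfw])
  · -- the minimization statement
    intro w hw hwe
    have hw1 : 0 < w + 1 := by linarith
    have hlog2 : 0 < Real.log 2 := Real.log_pos one_lt_two
    set a := L * Real.log 2 / B with hadef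
    have ha : 0 < a := by positivity
    set t0 := L * Real.log 2 / (B * (w + 1)) with ht0def
    have ht0 : 0 < t0 := div_pos (by positivity) (mul_pos hB hw1)
    have ht0a : t0 = a / (w + 1) := by rw [ht0def, hadef, div_div]
    have hat0 : a / t0 = w + 1 := by
      rw [ht0a]
      field_simp
    have hER : w * Real.exp (w + 1) = lam * H / (p * n0) - 1 := by
      calc w * Real.exp (w + 1) = (w * Real.exp w) * Real.exp 1 := by
            rw [Real.exp_add]; ring
        _ = lam * H / (p * n0) - 1 := by
            rw [hwe]; field_simp
    have hc_x : (p * n0 / H) * (lam * H / (p * n0)) = lam := by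
      field_simp
    have hcrit : (p * n0 / H) * (Real.exp (a / t0) * (1 - a / t0) - 1) + lam = 0 := by
      rw [hat0]
      linear_combination (-(p * n0 / H)) * hER - hc_x
    have hFG : ∀ t : ℝ, 0 < t →
        p * (n0 * t / H) * ((2 : ℝ) ^ (L / (B * t)) - 1) + lam * t =
        (p * n0 / H) * t * (Real.exp (a / t) - 1) + lam * t := by
      intro t htp
      have h2 : (2 : ℝ) ^ (L / (B * t)) = Real.exp (a / t) := by
        rw [Real.rpow_def_of_pos (by norm_num : (0:ℝ) < 2)]
        congr 1
        rw [hadef]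
        field_simp
      rw [h2]; ring
    have hkey := key_min a (p * n0 / H) lam T t0 ha (by positivity) hT ht0 hcrit
    have hminpos : 0 < min t0 T := lt_min ht0 hT
    refine ⟨⟨hminpos, min_le_right _ _⟩, ?_⟩
    intro t ht hne
    rw [hFG _ hminpos, hFG t ht.1]
    exact hkey t ht hne
end

section
/- For every L > 0 and B > 0, the function t ↦ t·(2^{L/(B·t)} − 1) is strictly convex on the interval (0,∞). -/
open Set Real

private lemma aux_hasDerivAt (a x : ℝ) (hx : 0 < x) :
    HasDerivAt (fun t : ℝ => t * (Real.exp (a / t) - 1))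
      (Real.exp (a / x) * (1 - a / x) - 1) x := by
  have h0 : HasDerivAt (fun t : ℝ => a / t) (-(a / x ^ 2)) x := by
    have := (hasDerivAt_inv hx.ne').const_mul a
    convert this using 1
    · rfl
    · rfl
    · funext y; ring
    · field_simp
  have h2 : HasDerivAt (fun t : ℝ => Real.exp (a / t) - 1)
      (Real.exp (a / x) * (-(a / x ^ 2))) x := (h0.exp).sub_const 1
  have h4 := (hasDerivAt_id x).mul h2
  convert h4 using 1
  · rfl
  · rfl
  · rfl
  · simp only [id]
    field_simp
    ring

private lemma aux_hasDerivAt2 (a x : ℝ) (hx : 0 < x) :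
    HasDerivAt (fun t : ℝ => Real.exp (a / t) * (1 - a / t) - 1)
      (Real.exp (a / x) * (a ^ 2 / x ^ 3)) x := by
  have h0 : HasDerivAt (fun t : ℝ => a / t) (-(a / x ^ 2)) x := by
    have := (hasDerivAt_inv hx.ne').const_mul a
    convert this using 1
    · rfl
    · rfl
    · funext y; ring
    · field_simp
  have h1 : HasDerivAt (fun t : ℝ => (1 : ℝ) - a / t) (a / x ^ 2) x := by
    simpa using h0.const_sub 1
  have h4 := ((h0.exp.mul h1).sub_const 1)
  convert h4 using 1
  · rfl
  · rfl
  · rfl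
  · field_simp
    ring

private lemma aux_strictConvex (a : ℝ) (ha : 0 < a) :
    StrictConvexOn ℝ (Set.Ioi (0 : ℝ))
      (fun t : ℝ => t * (Real.exp (a / t) - 1)) := by
  apply strictConvexOn_of_deriv2_pos (convex_Ioi 0)
  · apply ContinuousOn.mul continuousOn_id
    apply ContinuousOn.sub _ continuousOn_const
    exact Real.continuous_exp.comp_continuousOn
      (continuousOn_const.div continuousOn_id fun x hx => (mem_Ioi.mp hx).ne')
  · intro x hx
    rw [interior_Ioi] at hx
    have hx' : (0 : ℝ) < x := hx
    have hEq : deriv (fun t : ℝ => t * (Real.exp (a / t) - 1)) =ᶠ[nhds x]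
        (fun t : ℝ => Real.exp (a / t) * (1 - a / t) - 1) := by
      filter_upwards [isOpen_Ioi.mem_nhds hx] with y hy
      exact (aux_hasDerivAt a y hy).deriv
    have : (deriv^[2] (fun t : ℝ => t * (Real.exp (a / t) - 1))) x
        = Real.exp (a / x) * (a ^ 2 / x ^ 3) := by
      show deriv (deriv _) x = _
      rw [hEq.deriv_eq]
      exact (aux_hasDerivAt2 a x hx').deriv
    rw [this]
    positivity

/-- For bandwidth `B > 0` and `L > 0` bits, the transmission-energy function
`t ↦ t * (2 ^ (L / (B * t)) - 1)` is strictly convex on `(0, ∞)`. -/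
theorem transmission_energy_strictConvexOn (L B : ℝ) (hL : 0 < L) (hB : 0 < B) :
    StrictConvexOn ℝ (Set.Ioi (0 : ℝ))
      (fun t : ℝ => t * ((2 : ℝ) ^ (L / (B * t)) - 1)) := by
  have key := aux_strictConvex (Real.log 2 * L / B)
    (by positivity)
  convert key using 2 with t
  rcases eq_or_ne t 0 with rfl | ht
  · simp [Real.rpow_def_of_pos (by norm_num : (0:ℝ) < 2)]
  · rw [Real.rpow_def_of_pos (by norm_num : (0:ℝ) < 2)]
    congr 1
    field_simp
end

section
/- For every L > 0 and B > 0, the function t ↦ t·(2^{L/(B·t)} − 1) is strictly decreasing on the interval (0,∞); i.e., allotting a longer transmission duration strictly reduces the transmission energy. -/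
/-- For bandwidth `B > 0` and `L > 0` bits, the transmission-energy function
`t ↦ t * (2 ^ (L / (B * t)) - 1)` is strictly decreasing on `(0, ∞)`:
a longer transmission duration strictly reduces the transmission energy. -/
theorem transmission_energy_strictAntiOn (L B : ℝ) (hL : 0 < L) (hB : 0 < B) :
    StrictAntiOn (fun t : ℝ => t * ((2 : ℝ) ^ (L / (B * t)) - 1))
      (Set.Ioi (0 : ℝ)) := by
  have key : ∀ t : ℝ, 0 < t →
      HasDerivAt (fun t : ℝ => t * ((2 : ℝ) ^ (L / (B * t)) - 1))
        (1 * ((2 : ℝ) ^ (L / (B * t)) - 1) +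
          t * ((2 : ℝ) ^ (L / (B * t)) * Real.log 2 * (L / B * (-(t ^ 2)⁻¹)))) t := by
    intro t ht
    have hfun : (fun t : ℝ => L / (B * t)) = fun t : ℝ => L / B * t⁻¹ := by
      funext s; rw [← div_eq_mul_inv, div_div]
    have hg : HasDerivAt (fun t : ℝ => L / (B * t)) (L / B * (-(t ^ 2)⁻¹)) t := by
      rw [hfun]; exact (hasDerivAt_inv ht.ne').const_mul (L / B)
    have h2 : HasDerivAt (fun t : ℝ => (2 : ℝ) ^ (L / (B * t)))
        ((2 : ℝ) ^ (L / (B * t)) * Real.log 2 * (L / B * (-(t ^ 2)⁻¹))) t :=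
      ((Real.hasStrictDerivAt_const_rpow two_pos (L / (B * t))).hasDerivAt.comp t hg)
    exact (hasDerivAt_id t).mul (h2.sub_const 1)
  apply strictAntiOn_of_deriv_neg (convex_Ioi 0)
  · intro t ht
    exact (key t ht).continuousAt.continuousWithinAt
  · intro t ht
    rw [interior_Ioi] at ht
    have htpos : (0:ℝ) < t := ht
    rw [(key t ht).deriv]
    set u : ℝ := L / (B * t) with hu
    have hupos : 0 < u := div_pos hL (mul_pos hB ht)
    have hx : 0 < Real.log 2 * u := mul_pos (Real.log_pos one_lt_two) hupos
    set x : ℝ := Real.log 2 * u with hxdef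
    have h2u : (2 : ℝ) ^ u = Real.exp x := by
      rw [Real.rpow_def_of_pos two_pos]
    have htu : t * (L / B * (t ^ 2)⁻¹) = u := by
      rw [hu]; field_simp
    have hlt : (1 - x) * Real.exp x < 1 := by
      have := Real.add_one_lt_exp (x := -x) (by linarith)
      have hinv : Real.exp (-x) = (Real.exp x)⁻¹ := Real.exp_neg x
      nlinarith [Real.exp_pos x, mul_inv_cancel₀ (Real.exp_pos x).ne']
    have : t * ((2:ℝ) ^ u * Real.log 2 * (L / B * (-(t ^ 2)⁻¹))) = -(x * Real.exp x) := by
      rw [h2u, hxdef]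
      linear_combination (-(Real.exp (Real.log 2 * u) * Real.log 2)) * htu
    rw [this, h2u]
    nlinarith
end

section
/- Let T > 0, L ≥ 0, and let r : ℝ → ℝ be integrable on [0,T] with r(τ) ≥ 0 for almost every τ ∈ [0,T] and ∫_0^T r(τ) dτ = L. Then ∫_0^T n0·(2^{r(τ)/B} − 1) dτ ≥ T·n0·(2^{L/(B·T)} − 1). That is, among all rate schedules delivering L bits within T seconds, the constant rate L/T minimizes the transmission energy. -/
open MeasureTheory

/-- Among all rate schedules delivering `L` bits within `T` seconds, the constant
rate `L/T` minimizes the transmission energy: if `r` is integrable on `[0,T]`,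
a.e. nonnegative there, and `∫_0^T r = L`, then
`∫_0^T n0 * (2 ^ (r τ / B) - 1) dτ ≥ T * n0 * (2 ^ (L/(B*T)) - 1)`
(the energy integral of the nonnegative integrand is taken in `[0,∞]`). -/
theorem constant_rate_minimizes_energy
    (B n0 T L : ℝ) (hB : 0 < B) (hn0 : 0 < n0) (hT : 0 < T) (hL : 0 ≤ L)
    (r : ℝ → ℝ) (hr : IntegrableOn r (Set.Icc 0 T))
    (hr0 : ∀ᵐ τ ∂(volume.restrict (Set.Icc (0 : ℝ) T)), 0 ≤ r τ)
    (hrL : ∫ τ in Set.Icc (0 : ℝ) T, r τ = L) :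
    ENNReal.ofReal (T * (n0 * ((2 : ℝ) ^ (L / (B * T)) - 1))) ≤
      ∫⁻ τ in Set.Icc (0 : ℝ) T, ENNReal.ofReal (n0 * ((2 : ℝ) ^ (r τ / B) - 1)) := by
  set μ := volume.restrict (Set.Icc (0 : ℝ) T) with hμ
  set f : ℝ → ℝ := fun x => n0 * ((2 : ℝ) ^ (x / B) - 1) with hf
  -- rewrite f via exp
  have hfe : ∀ x, f x = n0 * (Real.exp (Real.log 2 / B * x) - 1) := by
    intro x
    simp only [hf]
    rw [Real.rpow_def_of_pos (by norm_num)]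
    ring_nf
  -- convexity of f on univ
  have hconv : ConvexOn ℝ Set.univ f := by
    have h1 : ConvexOn ℝ Set.univ (fun x : ℝ => Real.exp (Real.log 2 / B * x)) := by
      have := convexOn_exp.comp_affineMap ((Real.log 2 / B) • AffineMap.id ℝ ℝ)
      simpa [Function.comp_def, smul_eq_mul] using this
    have h2 := (h1.smul hn0.le).add (convexOn_const (-n0) convex_univ)
    refine h2.congr ?_
    intro x _
    simp [hfe x, mul_sub]
    ring
  -- continuity of f
  have hcont : Continuous f := by
    have : Continuous fun x : ℝ => Real.exp (Real.log 2 / B * x) :=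
      Real.continuous_exp.comp (continuous_const.mul continuous_id)
    rw [funext hfe]
    exact continuous_const.mul (this.sub continuous_const)
  -- f nonneg a.e.
  have hfnn : ∀ᵐ τ ∂μ, 0 ≤ f (r τ) := by
    filter_upwards [hr0] with τ hτ
    rw [hfe]
    have : (0:ℝ) ≤ Real.log 2 / B * r τ :=
      mul_nonneg (div_nonneg (Real.log_nonneg (by norm_num)) hB.le) hτ
    nlinarith [Real.one_le_exp this]
  have hmeas : AEStronglyMeasurable (fun τ => f (r τ)) μ :=
    hcont.comp_aestronglyMeasurable hr.aestronglyMeasurable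
  rcases eq_or_ne (∫⁻ τ, ENNReal.ofReal (f (r τ)) ∂μ) ⊤ with htop | htop
  · rw [htop]; exact le_top
  -- integrability of f ∘ r
  have hint : Integrable (fun τ => f (r τ)) μ := by
    refine ⟨hmeas, ?_⟩
    rw [hasFiniteIntegral_iff_ofReal hfnn]
    exact lt_top_iff_ne_top.2 htop
  -- lintegral = ofReal integral
  have hlint : (∫⁻ τ, ENNReal.ofReal (f (r τ)) ∂μ) = ENNReal.ofReal (∫ τ, f (r τ) ∂μ) :=
    (ofReal_integral_eq_lintegral_ofReal hint hfnn).symm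
  rw [hlint]
  apply ENNReal.ofReal_le_ofReal
  -- Jensen
  have hm : μ Set.univ = ENNReal.ofReal T := by
    simp [hμ, Real.volume_Icc, hT.le]
  haveI : IsFiniteMeasure μ := by
    constructor; rw [hm]; exact ENNReal.ofReal_lt_top
  haveI : NeZero μ := by
    constructor
    intro h
    rw [h] at hm
    simp only [Measure.coe_zero, Pi.zero_apply] at hm
    have := hm.symm
    rw [ENNReal.ofReal_eq_zero] at this
    linarith
  have hJ := hconv.map_average_le hcont.continuousOn isClosed_univ
    (Filter.Eventually.of_forall fun _ => Set.mem_univ _) hr hint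
  have havg : ⨍ τ, r τ ∂μ = L / T := by
    rw [average_eq, measureReal_def, hrL, hm, ENNReal.toReal_ofReal hT.le, smul_eq_mul]
    field_simp
  have havg2 : ⨍ τ, f (r τ) ∂μ = (∫ τ, f (r τ) ∂μ) / T := by
    rw [average_eq, measureReal_def, hm, ENNReal.toReal_ofReal hT.le, smul_eq_mul]
    ring
  rw [havg, havg2] at hJ
  have hfeq : f (L / T) = n0 * ((2 : ℝ) ^ (L / (B * T)) - 1) := by
    simp only [hf]
    congr 2
    rw [div_div]
    ring_nf
  rw [hfeq] at hJ
  calc T * (n0 * ((2 : ℝ) ^ (L / (B * T)) - 1)) ≤ T * ((∫ τ, f (r τ) ∂μ) / T) :=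
        by exact mul_le_mul_of_nonneg_left hJ hT.le
    _ = ∫ τ, f (r τ) ∂μ := by field_simp
end

section
/- If t* is a minimizer of Φ over the feasible set {t ∈ (0,T]^M : Σ_{m=1}^M t_m ≤ T}, then Σ_{m=1}^M t*_m = T; i.e., the deadline constraint holds with equality at any optimal time allocation. -/
/-- `(e^u - 1)/u` is strictly increasing: for `0 < s < r`,
`r (e^s - 1) < s (e^r - 1)`. -/
lemma exp_ratio_strict {s r : ℝ} (hs : 0 < s) (hsr : s < r) :
    r * (Real.exp s - 1) < s * (Real.exp r - 1) := by
  set d := r - s with hd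
  have hdpos : 0 < d := by simp [hd]; linarith
  have hA : Real.exp s - 1 < s * Real.exp s := by
    have h1 : (-s) + 1 < Real.exp (-s) := Real.add_one_lt_exp (by linarith)
    have h2 : Real.exp (-s) * Real.exp s = 1 := by
      rw [← Real.exp_add]; simp
    nlinarith [Real.exp_pos s]
  have hBd : d < Real.exp d - 1 := by
    have : d + 1 < Real.exp d := Real.add_one_lt_exp (by linarith)
    linarith
  have hr : Real.exp r = Real.exp s * Real.exp d := by
    rw [← Real.exp_add]; congr 1; simp [hd]
  have hEs : 0 < Real.exp s := Real.exp_pos s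
  have hstep1 : d * (Real.exp s - 1) < d * (s * Real.exp s) :=
    mul_lt_mul_of_pos_left hA hdpos
  have hstep2 : d * (s * Real.exp s) < (Real.exp d - 1) * (s * Real.exp s) :=
    mul_lt_mul_of_pos_right hBd (by positivity)
  have hreq : r = s + d := by simp [hd]
  rw [hr, hreq]
  nlinarith [hstep1, hstep2]

/-- `x ↦ x (e^{k/x} - 1)` is strictly decreasing on `(0, ∞)` for `k > 0`. -/
lemma key_decreasing {k x y : ℝ} (hk : 0 < k) (hx : 0 < x) (hxy : x < y) :
    y * (Real.exp (k / y) - 1) < x * (Real.exp (k / x) - 1) := by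
  have hy : 0 < y := lt_trans hx hxy
  set s := k / y with hs
  set r := k / x with hr'
  have hspos : 0 < s := div_pos hk hy
  have hrpos : 0 < r := div_pos hk hx
  have hsr : s < r := by
    apply div_lt_div_of_pos_left hk hx hxy
  have h := exp_ratio_strict hspos hsr
  have hyk : y = k / s := by rw [hs, div_div_eq_mul_div, mul_div_cancel_left₀ y hk.ne']
  have hxk : x = k / r := by rw [hr', div_div_eq_mul_div, mul_div_cancel_left₀ x hk.ne']
  rw [hyk, hxk, div_mul_eq_mul_div, div_mul_eq_mul_div,
    div_lt_div_iff₀ hspos hrpos]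
  nlinarith [h, hk]

/-- Each energy term is strictly decreasing in the allotted time. -/
lemma term_strict_anti {a L B x y : ℝ} (ha : 0 < a) (hL : 0 < L) (hB : 0 < B)
    (hx : 0 < x) (hxy : x < y) :
    a * y * ((2 : ℝ) ^ (L / (B * y)) - 1) < a * x * ((2 : ℝ) ^ (L / (B * x)) - 1) := by
  have hy : 0 < y := lt_trans hx hxy
  have hlog2 : 0 < Real.log 2 := Real.log_pos (by norm_num)
  have hk : 0 < L * Real.log 2 / B := by positivity
  have hrw : ∀ z : ℝ, 0 < z →
      (2 : ℝ) ^ (L / (B * z)) = Real.exp ((L * Real.log 2 / B) / z) := by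
    intro z hz
    rw [Real.rpow_def_of_pos (by norm_num : (0:ℝ) < 2)]
    congr 1
    field_simp
  rw [hrw x hx, hrw y hy, mul_assoc, mul_assoc]
  exact mul_lt_mul_of_pos_left (key_decreasing hk hx hxy) ha

/-- At any minimizer of the total transmission energy
`Φ(t) = ∑ m, a m * t m * (2 ^ (L m / (B * t m)) - 1)` over the feasible set
`{t ∈ (0,T]^M : ∑ m, t m ≤ T}`, the deadline constraint is tight: `∑ m, t m = T`. -/
theorem deadline_constraint_tight_at_optimum
    (B T : ℝ) (hB : 0 < B) (hT : 0 < T)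
    (M : ℕ) (hM : 1 ≤ M) (a L : Fin M → ℝ)
    (ha : ∀ m, 0 < a m) (hL : ∀ m, 0 < L m)
    (t : Fin M → ℝ) (htmem : ∀ m, t m ∈ Set.Ioc (0 : ℝ) T) (htsum : ∑ m, t m ≤ T)
    (hmin : ∀ t' : Fin M → ℝ, (∀ m, t' m ∈ Set.Ioc (0 : ℝ) T) → ∑ m, t' m ≤ T →
        ∑ m, a m * t m * ((2 : ℝ) ^ (L m / (B * t m)) - 1) ≤
          ∑ m, a m * t' m * ((2 : ℝ) ^ (L m / (B * t' m)) - 1)) :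
    ∑ m, t m = T := by
  by_contra hne
  have hlt : ∑ m, t m < T := lt_of_le_of_ne htsum hne
  set ε := T - ∑ m, t m with hε
  have hεpos : 0 < ε := by simp [hε]; linarith
  have hM0 : (0 : ℕ) < M := hM
  set m0 : Fin M := ⟨0, hM0⟩ with hm0
  have hm0le : t m0 ≤ ∑ m, t m :=
    Finset.single_le_sum (fun i _ => (htmem i).1.le) (Finset.mem_univ m0)
  set t' : Fin M → ℝ := Function.update t m0 (t m0 + ε) with ht'
  have ht'm0 : t' m0 = t m0 + ε := by simp [ht']
  have ht'ne : ∀ m, m ≠ m0 → t' m = t m := by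
    intro m hm; simp [ht', Function.update_of_ne hm]
  have htmem' : ∀ m, t' m ∈ Set.Ioc (0 : ℝ) T := by
    intro m
    by_cases h : m = m0
    · rw [h, ht'm0]
      constructor
      · have := (htmem m0).1; linarith
      · linarith
    · rw [ht'ne m h]; exact htmem m
  have hsum' : ∑ m, t' m = T := by
    have h1 : ∑ m, t' m = (t m0 + ε) + ∑ m ∈ Finset.univ.erase m0, t' m := by
      rw [← ht'm0]
      exact (Finset.add_sum_erase _ t' (Finset.mem_univ m0)).symm
    have h2 : ∑ m, t m = t m0 + ∑ m ∈ Finset.univ.erase m0, t m := by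
      exact (Finset.add_sum_erase _ t (Finset.mem_univ m0)).symm
    have h3 : ∑ m ∈ Finset.univ.erase m0, t' m = ∑ m ∈ Finset.univ.erase m0, t m := by
      apply Finset.sum_congr rfl
      intro m hm
      exact ht'ne m (Finset.ne_of_mem_erase hm)
    rw [h1, h3]
    linarith
  have hstrict : ∑ m, a m * t' m * ((2 : ℝ) ^ (L m / (B * t' m)) - 1) <
      ∑ m, a m * t m * ((2 : ℝ) ^ (L m / (B * t m)) - 1) := by
    apply Finset.sum_lt_sum
    · intro i _
      by_cases h : i = m0
      · rw [h, ht'm0]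
        exact le_of_lt (term_strict_anti (ha m0) (hL m0) hB (htmem m0).1 (by linarith))
      · rw [ht'ne i h]
    · refine ⟨m0, Finset.mem_univ m0, ?_⟩
      rw [ht'm0]
      exact term_strict_anti (ha m0) (hL m0) hB (htmem m0).1 (by linarith)
  have := hmin t' htmem' (le_of_eq hsum')
  linarith
end

section
/- The function Φ attains its infimum over the feasible set {t ∈ (0,T]^M : Σ_{m=1}^M t_m ≤ T} at exactly one point; i.e., the per-state time-allocation problem has a unique optimal solution. -/
open Real Finset

lemma strict_mid (k A x y : ℝ) (hk : 0 < k) (hA : 0 < A) (hx : 0 < x) (hy : 0 < y)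
    (hxy : x ≠ y) :
    A * ((x + y) / 2) * (Real.exp (k / ((x + y) / 2)) - 1) <
      (A * x * (Real.exp (k / x) - 1) + A * y * (Real.exp (k / y) - 1)) / 2 := by
  have hxy0 : 0 < x + y := by linarith
  have hne : k / x ≠ k / y := by
    intro h
    rw [div_eq_div_iff hx.ne' hy.ne'] at h
    exact hxy (mul_left_cancel₀ hk.ne' h.symm)
  have px : (0:ℝ) < x / (x + y) := by positivity
  have py : (0:ℝ) < y / (x + y) := by positivity
  have psum : x / (x + y) + y / (x + y) = 1 := by field_simp
  have key := strictConvexOn_exp.2 (Set.mem_univ (k / x)) (Set.mem_univ (k / y)) hne px py psum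
  simp only [smul_eq_mul] at key
  have harg : x / (x + y) * (k / x) + y / (x + y) * (k / y) = k / ((x + y) / 2) := by
    field_simp
    ring
  rw [harg] at key
  have key2 : ((x + y) / 2) * Real.exp (k / ((x + y) / 2)) <
      (x * Real.exp (k / x) + y * Real.exp (k / y)) / 2 := by
    have h2 := mul_lt_mul_of_pos_left key (by positivity : (0:ℝ) < (x + y) / 2)
    calc ((x + y) / 2) * Real.exp (k / ((x + y) / 2)) <
        (x + y) / 2 * (x / (x + y) * Real.exp (k / x) + y / (x + y) * Real.exp (k / y)) := h2
      _ = (x * Real.exp (k / x) + y * Real.exp (k / y)) / 2 := by field_simp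
  nlinarith [key2]

lemma exp_ge_sq (y : ℝ) (hy : 0 ≤ y) : y^2 / 4 ≤ Real.exp y := by
  have h1 : y / 2 + 1 ≤ Real.exp (y / 2) := Real.add_one_le_exp _
  have h2 : (y / 2 + 1)^2 ≤ (Real.exp (y / 2))^2 := by
    apply pow_le_pow_left₀ (by positivity) h1
  have h3 : (Real.exp (y / 2))^2 = Real.exp y := by
    rw [← Real.exp_nat_mul]; ring_nf
  nlinarith [h2, h3]

-- coercivity
lemma coercive (k A C : ℝ) (hk : 0 < k) (hA : 0 < A) :
    ∃ ε > 0, ∀ x : ℝ, 0 < x → x < ε → C < A * x * (Real.exp (k / x) - 1) := by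
  set D := max C 0 with hD
  refine ⟨min 1 (A * k^2 / (4 * (D + A + 1))), by positivity, fun x hx hxe => ?_⟩
  have hx1 : x < 1 := lt_of_lt_of_le hxe (min_le_left _ _)
  have hx2 : x < A * k^2 / (4 * (D + A + 1)) := lt_of_lt_of_le hxe (min_le_right _ _)
  have hkx : 0 ≤ k / x := by positivity
  have he : (k / x)^2 / 4 ≤ Real.exp (k / x) := exp_ge_sq _ hkx
  have hDpos : 0 < D + A + 1 := by
    have : (0:ℝ) ≤ D := le_max_right _ _
    linarith
  -- A * x * (exp(k/x) - 1) ≥ A * x * ((k/x)^2/4 - 1) = A*k^2/(4x) - A*x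
  have h4 : A * k^2 / (4 * x) - A * x ≤ A * x * (Real.exp (k / x) - 1) := by
    have : A * x * ((k / x)^2 / 4 - 1) ≤ A * x * (Real.exp (k / x) - 1) := by
      apply mul_le_mul_of_nonneg_left (by linarith) (by positivity)
    calc A * k^2 / (4 * x) - A * x = A * x * ((k / x)^2 / 4 - 1) := by
          field_simp
      _ ≤ _ := this
  have h5 : D + A + 1 < A * k^2 / (4 * x) := by
    rw [lt_div_iff₀ (by positivity)]
    rw [lt_div_iff₀ (by positivity)] at hx2
    nlinarith
  have hCD : C ≤ D := le_max_left _ _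
  nlinarith [h4, h5, mul_pos hA hx]

lemma term_nonneg (k A x : ℝ) (hk : 0 < k) (hA : 0 < A) (hx : 0 < x) :
    0 ≤ A * x * (Real.exp (k / x) - 1) := by
  have : (1:ℝ) ≤ Real.exp (k / x) := Real.one_le_exp (by positivity)
  have h := mul_pos hA hx
  nlinarith

lemma main_exp (T : ℝ) (hT : 0 < T)
    (M : ℕ) (hM : 1 ≤ M) (a k : Fin M → ℝ)
    (ha : ∀ m, 0 < a m) (hk : ∀ m, 0 < k m)
    (coercive : ∀ (km Am C : ℝ), 0 < km → 0 < Am →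
      ∃ ε > 0, ∀ x : ℝ, 0 < x → x < ε → C < Am * x * (Real.exp (km / x) - 1))
    (strict_mid : ∀ (km Am x y : ℝ), 0 < km → 0 < Am → 0 < x → 0 < y → x ≠ y →
      Am * ((x + y) / 2) * (Real.exp (km / ((x + y) / 2)) - 1) <
        (Am * x * (Real.exp (km / x) - 1) + Am * y * (Real.exp (km / y) - 1)) / 2) :
    ∃! t : Fin M → ℝ,
      ((∀ m, t m ∈ Set.Ioc (0 : ℝ) T) ∧ ∑ m, t m ≤ T) ∧
      ∀ t' : Fin M → ℝ, (∀ m, t' m ∈ Set.Ioc (0 : ℝ) T) → ∑ m, t' m ≤ T →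
        ∑ m, a m * t m * (Real.exp (k m / t m) - 1) ≤
          ∑ m, a m * t' m * (Real.exp (k m / t' m) - 1) := by
  classical
  haveI : NeZero M := ⟨by omega⟩
  set Ψ : (Fin M → ℝ) → ℝ := fun t => ∑ m, a m * t m * (Real.exp (k m / t m) - 1) with hΨ
  have hM0 : (0:ℝ) < (M:ℝ) := by exact_mod_cast Nat.pos_of_ne_zero (by omega)
  have hM1 : (1:ℝ) ≤ (M:ℝ) := by exact_mod_cast hM
  set t0 : Fin M → ℝ := fun _ => T / M with ht0
  have ht0m : ∀ m : Fin M, t0 m ∈ Set.Ioc (0:ℝ) T := by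
    intro m
    constructor
    · positivity
    · rw [div_le_iff₀ hM0]; nlinarith [hM1, hT]
  have ht0sum : ∑ m, t0 m ≤ T := by
    simp [ht0, Finset.sum_const, Finset.card_univ]
    rw [mul_div_cancel₀ _ hM0.ne']
  set C := Ψ t0 with hC
  choose εf hεf hεprop using fun m => coercive (k m) (a m) C (hk m) (ha m)
  haveI : Nonempty (Fin M) := ⟨⟨0, by omega⟩⟩
  set ε : ℝ := min (T / M) (Finset.univ.inf' Finset.univ_nonempty εf) with hε
  have hε0 : 0 < ε := by
    apply lt_min (by positivity)
    rw [Finset.lt_inf'_iff]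
    intro m _
    exact hεf m
  have hεle : ∀ m, ε ≤ εf m := fun m =>
    le_trans (min_le_right _ _) (Finset.inf'_le _ (Finset.mem_univ m))
  have hεTM : ε ≤ T / M := min_le_left _ _
  set K : Set (Fin M → ℝ) :=
    Set.Icc (fun _ => ε) (fun _ => T) ∩ {t | ∑ m, t m ≤ T} with hK
  have hKc : IsCompact K := by
    apply IsCompact.inter_right isCompact_Icc
    exact isClosed_le (continuous_finset_sum _ fun m _ => continuous_apply m) continuous_const
  have ht0K : t0 ∈ K := by
    constructor
    · constructor
      · intro m; exact hεTM
      · intro m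
        show T / (M:ℝ) ≤ T
        rw [div_le_iff₀ hM0]; nlinarith [hM1, hT]
    · exact ht0sum
  have hKpos : ∀ t ∈ K, ∀ m, 0 < t m := by
    intro t ht m
    exact lt_of_lt_of_le hε0 (ht.1.1 m)
  have hcont : ContinuousOn Ψ K := by
    apply continuousOn_finset_sum
    intro m _
    apply ContinuousOn.mul
    · exact continuousOn_const.mul (continuous_apply m).continuousOn
    · apply ContinuousOn.sub _ continuousOn_const
      apply Real.continuous_exp.comp_continuousOn
      exact continuousOn_const.div (continuous_apply m).continuousOn
        (fun t ht => (hKpos t ht m).ne')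
  obtain ⟨ts, htsK, hmin⟩ := hKc.exists_isMinOn ⟨t0, ht0K⟩ hcont
  have htsfeas : (∀ m, ts m ∈ Set.Ioc (0:ℝ) T) ∧ ∑ m, ts m ≤ T :=
    ⟨fun m => ⟨hKpos ts htsK m, htsK.1.2 m⟩, htsK.2⟩
  -- global minimality
  have hglobal : ∀ t' : Fin M → ℝ, (∀ m, t' m ∈ Set.Ioc (0:ℝ) T) → ∑ m, t' m ≤ T →
      Ψ ts ≤ Ψ t' := by
    intro t' hmem hsum
    by_cases hcase : ∀ m, ε ≤ t' m
    · exact hmin ⟨⟨hcase, fun m => (hmem m).2⟩, hsum⟩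
    · push_neg at hcase
      obtain ⟨m, hm⟩ := hcase
      have h1 : C < a m * t' m * (Real.exp (k m / t' m) - 1) :=
        hεprop m (t' m) (hmem m).1 (lt_of_lt_of_le hm (hεle m))
      have h2 : a m * t' m * (Real.exp (k m / t' m) - 1) ≤ Ψ t' := by
        apply Finset.single_le_sum (f := fun i => a i * t' i * (Real.exp (k i / t' i) - 1))
          (fun i _ => term_nonneg _ _ _ (hk i) (ha i) (hmem i).1) (Finset.mem_univ m)
      have h3 : Ψ ts ≤ C := hmin ht0K
      linarith
  refine ⟨ts, ⟨htsfeas, hglobal⟩, ?_⟩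
  -- uniqueness
  rintro s ⟨⟨hsmem, hssum⟩, hsmin⟩
  by_contra hne
  have hΨeq : Ψ s = Ψ ts :=
    le_antisymm (hsmin ts htsfeas.1 htsfeas.2) (hglobal s hsmem hssum)
  obtain ⟨j, hj⟩ : ∃ j, s j ≠ ts j := by
    by_contra h
    push_neg at h
    exact hne (funext h)
  set w : Fin M → ℝ := fun m => (s m + ts m) / 2 with hw
  have hwmem : ∀ m, w m ∈ Set.Ioc (0:ℝ) T := by
    intro m
    have h1 := (hsmem m).1
    have h2 := (htsfeas.1 m).1
    have h3 := (hsmem m).2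
    have h4 := (htsfeas.1 m).2
    constructor
    · simp only [hw]; positivity
    · simp only [hw]; linarith
  have hwsum : ∑ m, w m ≤ T := by
    simp only [hw]
    rw [← Finset.sum_div, Finset.sum_add_distrib]
    linarith [hssum, htsfeas.2]
  have hterm : ∀ i : Fin M, a i * w i * (Real.exp (k i / w i) - 1) ≤
      (a i * s i * (Real.exp (k i / s i) - 1) + a i * ts i * (Real.exp (k i / ts i) - 1)) / 2 := by
    intro i
    by_cases hi : s i = ts i
    · have hwi : w i = s i := by simp [hw, hi]
      rw [hwi, ← hi]
      exact le_of_eq (by ring)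
    · have h := strict_mid (k i) (a i) (s i) (ts i) (hk i) (ha i) (hsmem i).1
        (htsfeas.1 i).1 hi
      exact le_of_lt h
  have hstrictj : a j * w j * (Real.exp (k j / w j) - 1) <
      (a j * s j * (Real.exp (k j / s j) - 1) + a j * ts j * (Real.exp (k j / ts j) - 1)) / 2 :=
    strict_mid (k j) (a j) (s j) (ts j) (hk j) (ha j) (hsmem j).1 (htsfeas.1 j).1 hj
  have hsum_lt := Finset.sum_lt_sum (fun i _ => hterm i) ⟨j, Finset.mem_univ j, hstrictj⟩
  have hlt : Ψ w < (Ψ s + Ψ ts) / 2 := by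
    calc Ψ w < ∑ i, (a i * s i * (Real.exp (k i / s i) - 1) +
        a i * ts i * (Real.exp (k i / ts i) - 1)) / 2 := hsum_lt
      _ = (Ψ s + Ψ ts) / 2 := by
        rw [← Finset.sum_div, Finset.sum_add_distrib]
  have h2 : Ψ ts ≤ Ψ w := hglobal w hwmem hwsum
  rw [hΨeq] at hlt
  linarith


/-- The total transmission energy
`Φ(t) = ∑ m, a m * t m * (2 ^ (L m / (B * t m)) - 1)` attains its infimum over the
feasible set `{t ∈ (0,T]^M : ∑ m, t m ≤ T}` at exactly one point: the per-state
time-allocation problem has a unique optimal solution. -/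
theorem time_allocation_unique_minimizer
    (B T : ℝ) (hB : 0 < B) (hT : 0 < T)
    (M : ℕ) (hM : 1 ≤ M) (a L : Fin M → ℝ)
    (ha : ∀ m, 0 < a m) (hL : ∀ m, 0 < L m) :
    ∃! t : Fin M → ℝ,
      ((∀ m, t m ∈ Set.Ioc (0 : ℝ) T) ∧ ∑ m, t m ≤ T) ∧
      ∀ t' : Fin M → ℝ, (∀ m, t' m ∈ Set.Ioc (0 : ℝ) T) → ∑ m, t' m ≤ T →
        ∑ m, a m * t m * ((2 : ℝ) ^ (L m / (B * t m)) - 1) ≤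
          ∑ m, a m * t' m * ((2 : ℝ) ^ (L m / (B * t' m)) - 1) := by
  set k : Fin M → ℝ := fun m => L m * Real.log 2 / B with hkdef
  have hk : ∀ m, 0 < k m := by
    intro m
    have : (0:ℝ) < Real.log 2 := Real.log_pos (by norm_num)
    exact div_pos (mul_pos (hL m) this) hB
  have hEq : ∀ (t : Fin M → ℝ), (∀ m, 0 < t m) →
      ∑ m, a m * t m * ((2 : ℝ) ^ (L m / (B * t m)) - 1) =
        ∑ m, a m * t m * (Real.exp (k m / t m) - 1) := by
    intro t htpos
    apply Finset.sum_congr rfl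
    intro m _
    congr 2
    rw [Real.rpow_def_of_pos (by norm_num : (0:ℝ) < 2)]
    congr 1
    simp only [hkdef]
    ring
  obtain ⟨ts, ⟨hfeas, hmin⟩, huniq⟩ := main_exp T hT M hM a k ha hk
    (fun km Am C h1 h2 => coercive km Am C h1 h2)
    (fun km Am x y h1 h2 h3 h4 h5 => strict_mid km Am x y h1 h2 h3 h4 h5)
  refine ⟨ts, ⟨hfeas, ?_⟩, ?_⟩
  · intro t' h1 h2
    rw [hEq ts (fun m => (hfeas.1 m).1), hEq t' (fun m => (h1 m).1)]
    exact hmin t' h1 h2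
  · rintro y ⟨⟨hy1, hy2⟩, hy3⟩
    apply huniq
    refine ⟨⟨hy1, hy2⟩, fun t' h1 h2 => ?_⟩
    rw [← hEq y (fun m => (hy1 m).1), ← hEq t' (fun m => (h1 m).1)]
    exact hy3 t' h1 h2
end

section
/- Let 0 < λ₁ ≤ λ₂. If t₁ is a minimizer of F_{λ₁} over (0,T] and t₂ is a minimizer of F_{λ₂} over (0,T], then t₂ ≤ t₁. In other words, the optimal transmission duration is a non-increasing function of the Lagrange multiplier λ (which justifies computing the multiplier by bisection search). -/
lemma texp_hasDerivAt (c x : ℝ) (hx : 0 < x) :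
    HasDerivAt (fun t : ℝ => t * Real.exp (c / t))
      (Real.exp (c / x) * (1 - c / x)) x := by
  have hx0 : x ≠ 0 := ne_of_gt hx
  have h1 : HasDerivAt (fun t : ℝ => c / t) (-(c / x ^ 2)) x := by
    simpa [div_eq_mul_inv, mul_comm] using ((hasDerivAt_inv hx0).const_mul c)
  have h2 := h1.exp
  have h3 := (hasDerivAt_id x).mul h2
  refine h3.congr_deriv ?_
  simp only [id_eq]
  field_simp
  ring

lemma texp_deriv2 (c x : ℝ) (hx : 0 < x) :
    HasDerivAt (fun t : ℝ => Real.exp (c / t) * (1 - c / t))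
      (Real.exp (c / x) * (c ^ 2 / x ^ 3)) x := by
  have hx0 : x ≠ 0 := ne_of_gt hx
  have h1 : HasDerivAt (fun t : ℝ => c / t) (-(c / x ^ 2)) x := by
    simpa [div_eq_mul_inv, mul_comm] using ((hasDerivAt_inv hx0).const_mul c)
  have h2 := h1.exp
  have h4 : HasDerivAt (fun t : ℝ => 1 - c / t) (c / x ^ 2) x := by
    exact ((hasDerivAt_const x (1:ℝ)).sub h1).congr_deriv (by ring)
  have h5 := h2.mul h4
  refine h5.congr_deriv ?_
  field_simp
  ring

lemma texp_strictConvexOn (c : ℝ) (hc : 0 < c) :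
    StrictConvexOn ℝ (Set.Ioi (0:ℝ)) (fun t : ℝ => t * Real.exp (c / t)) := by
  apply strictConvexOn_of_deriv2_pos (convex_Ioi 0)
  · apply ContinuousOn.mul continuousOn_id
    exact Real.continuous_exp.comp_continuousOn
      (continuousOn_const.div continuousOn_id (fun x hx => ne_of_gt hx))
  · intro x hx
    rw [interior_Ioi] at hx
    have heq : deriv (fun t : ℝ => t * Real.exp (c / t)) =ᶠ[nhds x]
        (fun t : ℝ => Real.exp (c / t) * (1 - c / t)) := by
      filter_upwards [Ioi_mem_nhds hx] with y hy
      exact (texp_hasDerivAt c y hy).deriv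
    rw [show (2:ℕ) = 1+1 from rfl, Function.iterate_succ_apply', Function.iterate_one, Filter.EventuallyEq.deriv_eq heq, (texp_deriv2 c x hx).deriv]
    have hx0 : (0:ℝ) < x := hx
    positivity


/-- The optimal transmission duration is non-increasing in the Lagrange multiplier:
if `0 < λ₁ ≤ λ₂`, `t₁` minimizes `F_{λ₁}(t) = a*t*(2^(L/(B*t)) - 1) + λ₁*t` over `(0,T]`
and `t₂` minimizes `F_{λ₂}` over `(0,T]`, then `t₂ ≤ t₁`. -/
theorem optimal_duration_antitone_in_multiplier
    (B T a L lam1 lam2 t1 t2 : ℝ)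
    (hB : 0 < B) (hT : 0 < T) (ha : 0 < a) (hL : 0 < L)
    (hlam1 : 0 < lam1) (hlam12 : lam1 ≤ lam2)
    (ht1 : t1 ∈ Set.Ioc (0 : ℝ) T) (ht2 : t2 ∈ Set.Ioc (0 : ℝ) T)
    (hmin1 : ∀ t ∈ Set.Ioc (0 : ℝ) T,
        a * t1 * ((2 : ℝ) ^ (L / (B * t1)) - 1) + lam1 * t1 ≤
          a * t * ((2 : ℝ) ^ (L / (B * t)) - 1) + lam1 * t)
    (hmin2 : ∀ t ∈ Set.Ioc (0 : ℝ) T,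
        a * t2 * ((2 : ℝ) ^ (L / (B * t2)) - 1) + lam2 * t2 ≤
          a * t * ((2 : ℝ) ^ (L / (B * t)) - 1) + lam2 * t) :
    t2 ≤ t1 := by
  rcases lt_or_eq_of_le hlam12 with hlt | heq
  · by_contra h
    push_neg at h
    have h1 := hmin1 t2 ht2
    have h2 := hmin2 t1 ht1
    nlinarith [mul_pos (sub_pos.2 hlt) (sub_pos.2 h)]
  · subst heq
    by_contra h
    push_neg at h
    set c := L * Real.log 2 / B with hcdef
    have hlog2 : 0 < Real.log 2 := Real.log_pos (by norm_num)
    have hc : 0 < c := by positivity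
    have key : ∀ t : ℝ, 0 < t →
        a * t * ((2 : ℝ) ^ (L / (B * t)) - 1) + lam1 * t
          = a * (t * Real.exp (c / t)) + (lam1 - a) * t := by
      intro t ht
      rw [Real.rpow_def_of_pos (by norm_num : (0:ℝ) < 2)]
      have hct : Real.log 2 * (L / (B * t)) = c / t := by
        rw [hcdef]; field_simp
      rw [hct]; ring
    set m := (1/2 : ℝ) * t1 + (1/2 : ℝ) * t2 with hmdef
    have hm : m ∈ Set.Ioc (0 : ℝ) T := by
      constructor
      · have := ht1.1; have := ht2.1; rw [hmdef]; linarith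
      · have := ht1.2; have := ht2.2; rw [hmdef]; linarith
    have hsc := (texp_strictConvexOn c hc).2 (Set.mem_Ioi.2 ht1.1) (Set.mem_Ioi.2 ht2.1)
      (ne_of_lt h) (by norm_num : (0:ℝ) < 1/2) (by norm_num : (0:ℝ) < 1/2) (by norm_num)
    simp only [smul_eq_mul] at hsc
    have hF1 := hmin1 t2 ht2
    have hF2 := hmin2 t1 ht1
    have hFm := hmin1 m hm
    rw [key t1 ht1.1, key t2 ht2.1] at hF1 hF2
    rw [key t1 ht1.1, key m hm.1] at hFm
    rw [show (1/2:ℝ)*t1+1/2*t2 = m from hmdef.symm] at hsc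
    have := mul_lt_mul_of_pos_left hsc ha
    have hmval : m = 1/2*t1 + 1/2*t2 := hmdef
    nlinarith [this, hF1, hF2, hFm, hmval]
end

section
/- There exist λ ≥ 0 and t ∈ (0,T]^M with Σ_{m=1}^M t_m = T such that, for every m ∈ {1,…,M}, the component t_m minimizes the per-task Lagrangian cost s ↦ a_m·s·(2^{L_m/(B·s)} − 1) + λ·s over s ∈ (0,T]. (This is the existence of the multiplier λ^{0†} for which the closed-form durations exhaust the deadline T exactly.) -/
open Real Set

noncomputable def Et : ℝ → ℝ := fun x => if x ≤ 0 then x else Real.exp x * (x - 1) + 1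

lemma Et_of_nonpos {x : ℝ} (h : x ≤ 0) : Et x = x := if_pos h
lemma Et_of_pos {x : ℝ} (h : 0 < x) : Et x = Real.exp x * (x - 1) + 1 := if_neg (not_le.2 h)
lemma Et_zero : Et 0 = 0 := Et_of_nonpos le_rfl

lemma E_strictMonoOn : StrictMonoOn (fun x => Real.exp x * (x - 1) + 1) (Ici (0:ℝ)) := by
  apply strictMonoOn_of_deriv_pos (convex_Ici 0)
  · fun_prop
  · intro x hx
    rw [interior_Ici] at hx
    have h : HasDerivAt (fun x => Real.exp x * (x - 1) + 1) (Real.exp x * x) x := by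
      have := ((Real.hasDerivAt_exp x).mul ((hasDerivAt_id x).sub_const 1)).add_const 1
      refine this.congr_deriv ?_
      simp only [id_eq]
      ring
    rw [h.deriv]
    exact mul_pos (Real.exp_pos x) hx

lemma Et_continuous : Continuous Et := by
  apply Continuous.if_le (by fun_prop) (by fun_prop) continuous_id continuous_const
  intro x hx
  simp only [id] at hx
  subst hx
  simp

lemma Et_strictMono : StrictMono Et := by
  intro x y hxy
  rcases le_or_gt y 0 with hy | hy
  · rw [Et_of_nonpos (hxy.le.trans hy), Et_of_nonpos hy]; exact hxy
  · rcases le_or_gt x 0 with hx | hx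
    · rw [Et_of_nonpos hx, Et_of_pos hy]
      calc x ≤ 0 := hx
        _ = Real.exp 0 * (0 - 1) + 1 := by simp
        _ < Real.exp y * (y - 1) + 1 := E_strictMonoOn (Set.mem_Ici.mpr le_rfl) hy.le hy
    · rw [Et_of_pos hx, Et_of_pos hy]
      exact E_strictMonoOn hx.le (hx.trans hxy).le hxy

lemma Et_surjective : Function.Surjective Et := by
  intro y
  rcases le_or_gt y 0 with hy | hy
  · exact ⟨y, Et_of_nonpos hy⟩
  · have h1 : Et 0 ≤ y := by rw [Et_zero]; exact hy.le
    have h2 : y ≤ Et (y + 1) := by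
      rw [Et_of_pos (by linarith)]
      nlinarith [Real.add_one_le_exp (y + 1), Real.exp_pos (y + 1)]
    have : y ∈ Icc (Et 0) (Et (y + 1)) := ⟨h1, h2⟩
    have := intermediate_value_Icc (by linarith : (0:ℝ) ≤ y + 1) Et_continuous.continuousOn this
    obtain ⟨x, _, hx⟩ := this
    exact ⟨x, hx⟩

noncomputable def EtIso : ℝ ≃o ℝ := StrictMono.orderIsoOfSurjective Et Et_strictMono Et_surjective

lemma EtIso_apply (x : ℝ) : EtIso x = Et x := by
  rw [EtIso, StrictMono.coe_orderIsoOfSurjective]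

lemma Et_symm_apply (y : ℝ) : Et (EtIso.symm y) = y := by
  rw [← EtIso_apply]; exact EtIso.apply_symm_apply y

lemma EtIso_symm_zero : EtIso.symm 0 = 0 := by
  rw [OrderIso.symm_apply_eq, EtIso_apply, Et_zero]



noncomputable def gg (a k lam : ℝ) : ℝ → ℝ := fun s => a * s * (Real.exp (k / s) - 1) + lam * s

lemma gg_hasDerivAt_aux (a k lam : ℝ) {s : ℝ} (hs : s ≠ 0) :
    HasDerivAt (gg a k lam) (lam - a * (Real.exp (k / s) * (k / s - 1) + 1)) s := by
  have h1 : HasDerivAt (fun y : ℝ => k / y) (k * (-(s ^ 2)⁻¹)) s := by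
    simpa [div_eq_mul_inv] using (hasDerivAt_inv hs).const_mul k
  have h2 := h1.exp
  have h3 := h2.sub_const 1
  have h4 := (hasDerivAt_id s).mul h3
  have h5 := (h4.const_mul a).add ((hasDerivAt_id s).const_mul lam)
  convert h5 using 1
  · rfl
  · rfl
  · ext y; simp [gg]; ring
  · simp only [id_eq]
    field_simp
    ring

lemma gg_hasDerivAt (a k lam : ℝ) (hk : 0 < k) {s : ℝ} (hs : 0 < s) :
    HasDerivAt (gg a k lam) (lam - a * Et (k / s)) s := by
  rw [Et_of_pos (div_pos hk hs)]
  exact gg_hasDerivAt_aux a k lam hs.ne'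

lemma gg_min (a k lam T : ℝ) (ha : 0 < a) (hk : 0 < k) (hT : 0 < T)
    (x : ℝ) (hx : 0 < x) (hEx : Et x = lam / a) :
    ∀ s ∈ Ioc (0:ℝ) T, gg a k lam (min T (k / x)) ≤ gg a k lam s := by
  set t := min T (k / x) with ht
  have htpos : 0 < t := lt_min hT (div_pos hk hx)
  have htT : t ≤ T := min_le_left _ _
  have hcont : ∀ (D : Set ℝ), (∀ y ∈ D, y ≠ 0) → ContinuousOn (gg a k lam) D := by
    intro D hD
    apply ContinuousOn.add _ (continuousOn_const.mul continuousOn_id)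
    apply ContinuousOn.mul (continuousOn_const.mul continuousOn_id)
    exact (ContinuousOn.rexp (continuousOn_const.div continuousOn_id hD)).sub continuousOn_const
  -- derivative sign facts
  have key : ∀ s : ℝ, 0 < s → s ≤ k / x → deriv (gg a k lam) s ≤ 0 := by
    intro s hs hsle
    rw [(gg_hasDerivAt a k lam hk hs).deriv]
    have h1 : x ≤ k / s := by
      rw [le_div_iff₀ hs]
      have := (le_div_iff₀ hx).mp hsle
      linarith
    have h2 : lam / a ≤ Et (k / s) := hEx ▸ Et_strictMono.monotone h1
    have : lam ≤ a * Et (k / s) := by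
      rw [div_le_iff₀ ha] at h2; linarith
    linarith
  have key2 : ∀ s : ℝ, k / x ≤ s → 0 ≤ deriv (gg a k lam) s := by
    intro s hsge
    have hs : 0 < s := lt_of_lt_of_le (div_pos hk hx) hsge
    rw [(gg_hasDerivAt a k lam hk hs).deriv]
    have h1 : k / s ≤ x := by
      rw [div_le_iff₀ hs]
      have := (div_le_iff₀ hx).mp hsge
      linarith
    have h2 : Et (k / s) ≤ lam / a := hEx ▸ Et_strictMono.monotone h1
    have : a * Et (k / s) ≤ lam := by
      rw [le_div_iff₀ ha] at h2; linarith
    linarith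
  have hanti : AntitoneOn (gg a k lam) (Ioc 0 t) := by
    apply antitoneOn_of_deriv_nonpos (convex_Ioc 0 t)
    · exact hcont _ (fun y hy => (hy.1).ne')
    · intro y hy
      rw [interior_Ioc] at hy
      exact ((gg_hasDerivAt a k lam hk hy.1).differentiableAt).differentiableWithinAt
    · intro y hy
      rw [interior_Ioc] at hy
      exact key y hy.1 (hy.2.le.trans (min_le_right _ _))
  have hmono : MonotoneOn (gg a k lam) (Icc t T) := by
    apply monotoneOn_of_deriv_nonneg (convex_Icc t T)
    · exact hcont _ (fun y hy => (lt_of_lt_of_le htpos hy.1).ne')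
    · intro y hy
      rw [interior_Icc] at hy
      exact ((gg_hasDerivAt a k lam hk (lt_trans htpos hy.1)).differentiableAt).differentiableWithinAt
    · intro y hy
      rw [interior_Icc] at hy
      apply key2
      -- t < y and y < T; if k/x ≤ T then t = k/x ≤ y; else Ioo t T empty
      rcases le_or_gt (k / x) T with hcase | hcase
      · have : t = k / x := min_eq_right hcase
        linarith [hy.1, this ▸ hy.1]
      · have : t = T := min_eq_left hcase.le
        exfalso; linarith [hy.1, hy.2, this ▸ hy.1]
  intro s hs
  rcases le_or_gt s t with hst | hst
  · exact hanti ⟨hs.1, hst⟩ ⟨htpos, le_rfl⟩ hst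
  · exact hmono ⟨le_rfl, htT⟩ ⟨hst.le, hs.2⟩ hst.le



lemma EtIso_symm_pos {y : ℝ} (hy : 0 < y) : 0 < EtIso.symm y := by
  rw [← EtIso_symm_zero]
  exact EtIso.symm.strictMono hy

lemma EtIso_symm_le {y z : ℝ} (hz : y ≤ Et z) : EtIso.symm y ≤ z := by
  rw [← EtIso.symm_apply_apply z]
  exact EtIso.symm.monotone (by rwa [EtIso_apply])

lemma le_EtIso_symm {y z : ℝ} (hz : Et z ≤ y) : z ≤ EtIso.symm y := by
  rw [← EtIso.symm_apply_apply z]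
  exact EtIso.symm.monotone (by rwa [EtIso_apply])

/-- Existence of the multiplier `λ^{0†}`: there exist `λ ≥ 0` and `t ∈ (0,T]^M` with
`∑ m, t m = T` such that each `t m` minimizes the per-task Lagrangian cost
`s ↦ a m * s * (2 ^ (L m / (B * s)) - 1) + λ * s` over `s ∈ (0,T]`. -/
theorem multiplier_with_tight_deadline_exists
    (B T : ℝ) (hB : 0 < B) (hT : 0 < T)
    (M : ℕ) (hM : 1 ≤ M) (a L : Fin M → ℝ)
    (ha : ∀ m, 0 < a m) (hL : ∀ m, 0 < L m) :
    ∃ (lam : ℝ) (t : Fin M → ℝ), 0 ≤ lam ∧ (∀ m, t m ∈ Set.Ioc (0 : ℝ) T) ∧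
      (∑ m, t m = T) ∧
      ∀ m, ∀ s ∈ Set.Ioc (0 : ℝ) T,
        a m * t m * ((2 : ℝ) ^ (L m / (B * t m)) - 1) + lam * t m ≤
          a m * s * ((2 : ℝ) ^ (L m / (B * s)) - 1) + lam * s := by
  have hlog2 : (0:ℝ) < Real.log 2 := Real.log_pos one_lt_two
  set k : Fin M → ℝ := fun m => Real.log 2 * L m / B with hk_def
  have hk : ∀ m, 0 < k m := fun m => div_pos (mul_pos hlog2 (hL m)) hB
  have hNE : Nonempty (Fin M) := ⟨⟨0, hM⟩⟩
  have hU : (Finset.univ : Finset (Fin M)).Nonempty := Finset.univ_nonempty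
  have hEtpos : ∀ {z : ℝ}, 0 < z → 0 < Et z := by
    intro z hz
    rw [← Et_zero]
    exact Et_strictMono hz
  -- the candidate duration map
  set tt : ℝ → Fin M → ℝ := fun lam m => min T (k m / EtIso.symm (lam / a m)) with htt
  set G : ℝ → ℝ := fun lam => ∑ m, tt lam m with hG
  set lam0 : ℝ := Finset.univ.inf' hU (fun m => a m * Et (k m / T)) with hlam0
  have hlam0pos : 0 < lam0 := by
    rw [hlam0, Finset.lt_inf'_iff]
    exact fun m _ => mul_pos (ha m) (hEtpos (div_pos (hk m) hT))
  set lam1 : ℝ := max lam0 (Finset.univ.sup' hU (fun m => a m * Et ((M : ℝ) * k m / T))) with hlam1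
  have hle01 : lam0 ≤ lam1 := le_max_left _ _
  have hMpos : (0:ℝ) < (M:ℝ) := by exact_mod_cast hM
  -- positivity of symm on the interval
  have hsymm_pos : ∀ (lam : ℝ), lam0 ≤ lam → ∀ m, 0 < EtIso.symm (lam / a m) := by
    intro lam hlam m
    exact EtIso_symm_pos (div_pos (lt_of_lt_of_le hlam0pos hlam) (ha m))
  -- G lam0 = M * T
  have hG0 : G lam0 = (M : ℝ) * T := by
    rw [hG]
    have : ∀ m : Fin M, tt lam0 m = T := by
      intro m
      apply min_eq_left
      rw [le_div_iff₀ (hsymm_pos lam0 le_rfl m)]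
      have h1 : lam0 / a m ≤ Et (k m / T) := by
        rw [div_le_iff₀ (ha m), mul_comm]
        exact Finset.inf'_le _ (Finset.mem_univ m)
      have h2 := EtIso_symm_le h1
      calc T * EtIso.symm (lam0 / a m) ≤ T * (k m / T) := by
            exact mul_le_mul_of_nonneg_left h2 hT.le
        _ = k m := by field_simp
    simp only [this, Finset.sum_const, Finset.card_univ, Fintype.card_fin, nsmul_eq_mul]
  -- G lam1 ≤ T
  have hG1 : G lam1 ≤ T := by
    rw [hG]
    have hbd : ∀ m : Fin M, tt lam1 m ≤ T / M := by
      intro m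
      refine le_trans (min_le_right _ _) ?_
      rw [div_le_div_iff₀ (hsymm_pos lam1 hle01 m) hMpos]
      have h1 : Et ((M:ℝ) * k m / T) ≤ lam1 / a m := by
        rw [le_div_iff₀ (ha m), mul_comm]
        exact le_trans (Finset.le_sup' (fun m => a m * Et ((M:ℝ) * k m / T)) (Finset.mem_univ m)) (le_max_right _ _)
      have h2 := le_EtIso_symm h1
      calc k m * (M:ℝ) = ((M:ℝ) * k m / T) * T := by field_simp
        _ ≤ EtIso.symm (lam1 / a m) * T := by exact mul_le_mul_of_nonneg_right h2 hT.le
        _ = T * EtIso.symm (lam1 / a m) := mul_comm _ _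
    calc ∑ m, tt lam1 m ≤ ∑ _m : Fin M, T / M :=
          Finset.sum_le_sum (fun m _ => hbd m)
      _ = (M:ℝ) * (T / M) := by
          simp [Finset.sum_const, Finset.card_univ, nsmul_eq_mul]
      _ = T := by field_simp
  -- continuity of G on [lam0, lam1]
  have hGcont : ContinuousOn G (Icc lam0 lam1) := by
    rw [hG]
    apply continuousOn_finset_sum
    intro m _
    have hc : ContinuousOn (fun y => k m / EtIso.symm (y / a m)) (Icc lam0 lam1) := by
      apply ContinuousOn.div continuousOn_const
      · exact Continuous.continuousOn (EtIso.symm.continuous.comp (continuous_id.div_const (a m)))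
      · intro y hy
        exact (hsymm_pos y hy.1 m).ne'
    exact ContinuousOn.inf continuousOn_const hc
  -- IVT
  have hTmem : T ∈ Icc (G lam1) (G lam0) := by
    constructor
    · exact hG1
    · rw [hG0]
      have h1M : (1:ℝ) ≤ (M:ℝ) := by exact_mod_cast hM
      nlinarith
  obtain ⟨lam, hlammem, hlamT⟩ := intermediate_value_Icc' hle01 hGcont hTmem
  have hlampos : 0 < lam := lt_of_lt_of_le hlam0pos hlammem.1
  refine ⟨lam, tt lam, hlampos.le, ?_, hlamT, ?_⟩
  · intro m
    exact ⟨lt_min hT (div_pos (hk m) (hsymm_pos lam hlammem.1 m)), min_le_left _ _⟩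
  · intro m s hs
    have hrw : ∀ u : ℝ, a m * u * ((2 : ℝ) ^ (L m / (B * u)) - 1) + lam * u = gg (a m) (k m) lam u := by
      intro u
      rw [gg]
      have : (2 : ℝ) ^ (L m / (B * u)) = Real.exp (k m / u) := by
        rw [Real.rpow_def_of_pos two_pos]
        congr 1
        rw [hk_def]
        ring
      rw [this]
    rw [hrw, hrw]
    exact gg_min (a m) (k m) lam T (ha m) (hk m) hT _
      (hsymm_pos lam hlammem.1 m) (Et_symm_apply _) s hs
end
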